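/- If f is a pseudo-Morse function consistent with a gradient vector field V, then the merged relation obtained as the transitive closure of the union of ≺_f (defined by φ ≺_f ρ ⟺ f(φ)<f(ρ)) and the induced partial order ≺_V is a strict partial order; consequently there exists a strict total order on the cells that is simultaneously a linear extension of ≺_f and of ≺_V. -/

import Mathlib

open Classical

variable {Cell : Type}

/-- A discrete vector field: a set of pairs (σ,τ) with σ a facet of τ,
each cell occurring in at most one pair. -/
def IsVectorField (facet : Cell → Cell → Prop) (V : Set (Cell × Cell)) : Prop :=
  (∀ p ∈ V, facet p.1 p.2) ∧
  ∀ p ∈ V, ∀ q ∈ V, (p.1 = q.1 ∨ p.1 = q.2 ∨ p.2 = q.1 ∨ p.2 = q.2) → p = q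

/-- The covering relation ←_V : `covRel facet V x y` means x ←_V y. -/
def covRel (facet : Cell → Cell → Prop) (V : Set (Cell × Cell)) (x y : Cell) : Prop :=
  (facet x y ∧ (x, y) ∉ V) ∨ (y, x) ∈ V

/-- The strict partial order ≺_V induced by V: transitive closure of ←_V. -/
def indOrder (facet : Cell → Cell → Prop) (V : Set (Cell × Cell)) : Cell → Cell → Prop :=
  Relation.TransGen (covRel facet V)

/-- The reflexive closure ⪯_V of ≺_V. -/
def indOrderLe (facet : Cell → Cell → Prop) (V : Set (Cell × Cell)) : Cell → Cell → Prop :=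
  Relation.ReflTransGen (covRel facet V)

/-- A V-path (σ₀,τ₀,σ₁,…,τ_{r-1},σ_r), encoded by its first cell σ₀ and the
list of pairs (τ_i, σ_{i+1}). -/
def IsVPath (facet : Cell → Cell → Prop) (V : Set (Cell × Cell)) :
    Cell → List (Cell × Cell) → Prop
  | _, [] => True
  | σ, (τ, σ') :: rest => (σ, τ) ∈ V ∧ facet σ' τ ∧ (σ', τ) ∉ V ∧ IsVPath facet V σ' rest

/-- The last cell σ_r of a V-path. -/
def pathLast (σ : Cell) (l : List (Cell × Cell)) : Cell :=
  (l.getLast?.map Prod.snd).getD σ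

/-- No nontrivial closed V-paths. -/
def NoClosedVPath (facet : Cell → Cell → Prop) (V : Set (Cell × Cell)) : Prop :=
  ∀ σ (l : List (Cell × Cell)), IsVPath facet V σ l → l ≠ [] → pathLast σ l ≠ σ

/-- A discrete gradient vector field. -/
def IsGradient (facet : Cell → Cell → Prop) (V : Set (Cell × Cell)) : Prop :=
  IsVectorField facet V ∧ NoClosedVPath facet V

/-- A cell is critical if it belongs to no pair of V. -/
def IsCritical (V : Set (Cell × Cell)) (x : Cell) : Prop :=
  ∀ p ∈ V, p.1 ≠ x ∧ p.2 ≠ x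

/-- f is a discrete Morse function with gradient vector field V. -/
def IsMorse (facet : Cell → Cell → Prop) (V : Set (Cell × Cell)) (f : Cell → ℝ) : Prop :=
  ∀ σ τ, facet σ τ → (((σ, τ) ∉ V → f σ < f τ) ∧ ((σ, τ) ∈ V → f τ ≤ f σ))

/-- f is a discrete pseudo-Morse function consistent with V. -/
def IsPseudoMorse (facet : Cell → Cell → Prop) (V : Set (Cell × Cell)) (f : Cell → ℝ) : Prop :=
  ∀ σ τ, facet σ τ → (((σ, τ) ∉ V → f σ ≤ f τ) ∧ ((σ, τ) ∈ V → f τ ≤ f σ))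

/-- The pairs (σ_i, τ_i) of a V-path given by σ₀ and l = [(τ₀,σ₁),…]. -/
def oldPairs (σ0 : Cell) (l : List (Cell × Cell)) : List (Cell × Cell) :=
  List.zip (σ0 :: l.map Prod.snd) (l.map Prod.fst)

/-- The reversed pairs (σ_{i+1}, τ_i) of a V-path. -/
def newPairs (l : List (Cell × Cell)) : List (Cell × Cell) :=
  l.map (fun p => (p.2, p.1))

/-- Reversal of V along the V-path from σ₀ ∈ ∂ρ given by l (Forman cancelation). -/
def reverseField (V : Set (Cell × Cell)) (ρ σ0 : Cell) (l : List (Cell × Cell)) :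
    Set (Cell × Cell) :=
  (V \ {p : Cell × Cell | p ∈ oldPairs σ0 l}) ∪ {p : Cell × Cell | p ∈ newPairs l} ∪ {(σ0, ρ)}

/-- A combinatorial surface (closed): facets raise dimension by one, dimensions are ≤ 2,
every 1-cell has exactly two boundary 0-cells and is a facet of exactly two 2-cells. -/
def IsCombSurface (dim : Cell → ℕ) (facet : Cell → Cell → Prop) : Prop :=
  (∀ σ τ, facet σ τ → dim τ = dim σ + 1) ∧
  (∀ x, dim x ≤ 2) ∧
  (∀ τ, dim τ = 1 → ∃ a b, a ≠ b ∧ ∀ x, facet x τ ↔ (x = a ∨ x = b)) ∧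
  (∀ τ, dim τ = 1 → ∃ A B, A ≠ B ∧ ∀ X, facet τ X ↔ (X = A ∨ X = B))

lemma pathLast_cons (σ : Cell) (p : Cell × Cell) (l : List (Cell × Cell)) :
    pathLast σ (p :: l) = pathLast p.2 l := by
  cases l with
  | nil => simp [pathLast]
  | cons q l' =>
    cases hz : (q :: l').getLast? with
    | none => simp at hz
    | some z => simp [pathLast, List.getLast?_cons_cons, hz]

lemma indOrder_irrefl [Fintype Cell] (dim : Cell → ℕ) (facet : Cell → Cell → Prop)
    (hdim : ∀ σ τ, facet σ τ → dim τ = dim σ + 1)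
    (V : Set (Cell × Cell)) (hV : IsGradient facet V) (x : Cell) :
    ¬ indOrder facet V x x := by
  intro hx
  set C := covRel facet V with hC
  set S : Set Cell := {y | Relation.TransGen C x y ∧ Relation.TransGen C y x} with hS
  have hxS : x ∈ S := ⟨hx, hx⟩
  obtain ⟨τ0, hτ0S, hτ0max⟩ := Set.exists_max_image S dim (Set.toFinite S) ⟨x, hxS⟩
  set good : Cell → Prop := fun τ => τ ∈ S ∧ ∀ y ∈ S, dim y ≤ dim τ with hgood
  have key : ∀ τ, good τ → ∃ σ' τ', good τ' ∧ (σ', τ) ∈ V ∧ facet σ' τ' ∧ (σ', τ') ∉ V := by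
    rintro τ ⟨hτS, hmax⟩
    have h1 : Relation.TransGen C τ τ := hτS.2.trans hτS.1
    obtain ⟨y, hy1, hy2⟩ := Relation.TransGen.head'_iff.1 h1
    have hyS : y ∈ S := ⟨hτS.1.tail hy1, Relation.TransGen.trans_right hy2 hτS.2⟩
    have hyV : (y, τ) ∈ V := by
      rcases hy1 with ⟨hfac, -⟩ | h
      · have := hdim τ y hfac
        have := hmax y hyS
        omega
      · exact h
    have hfyτ : facet y τ := hV.1.1 (y, τ) hyV
    have hdy : dim τ = dim y + 1 := hdim y τ hfyτ
    have h2 : Relation.TransGen C y y := hyS.2.trans hyS.1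
    obtain ⟨z, hz1, hz2⟩ := Relation.TransGen.head'_iff.1 h2
    have hzS : z ∈ S := ⟨hyS.1.tail hz1, Relation.TransGen.trans_right hz2 hyS.2⟩
    rcases hz1 with ⟨hfac, hnotV⟩ | h
    · refine ⟨y, z, ⟨hzS, ?_⟩, hyV, hfac, hnotV⟩
      intro w hw
      have := hdim y z hfac
      have := hmax w hw
      have := hmax z hzS
      omega
    · -- (z, y) ∈ V, but (y, τ) ∈ V : uniqueness forces contradiction
      have := hV.1.2 (z, y) h (y, τ) hyV (by right; right; left; rfl)
      have hy : y = τ := congrArg Prod.snd this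
      subst hy
      omega
  have hgτ0 : good τ0 := ⟨hτ0S, hτ0max⟩
  have Fex : ∀ t : {τ // good τ}, ∃ p : Cell × {τ' // good τ'},
      (p.1, t.1) ∈ V ∧ facet p.1 p.2.1 ∧ (p.1, p.2.1) ∉ V := by
    rintro ⟨τ, h⟩
    obtain ⟨σ', τ', h1, h2, h3, h4⟩ := key τ h
    exact ⟨(σ', ⟨τ', h1⟩), h2, h3, h4⟩
  choose F hF1 hF2 hF3 using Fex
  set seq : ℕ → {τ // good τ} := fun n => Nat.rec ⟨τ0, hgτ0⟩ (fun _ t => (F t).2) n with hseq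
  set τs : ℕ → Cell := fun n => (seq n).1 with hτs
  set ss : ℕ → Cell := fun n => (F (seq n)).1 with hss
  have hseqsucc : ∀ n, seq (n + 1) = (F (seq n)).2 := fun n => rfl
  have P1 : ∀ n, (ss n, τs n) ∈ V := fun n => hF1 (seq n)
  have P2 : ∀ n, facet (ss n) (τs (n + 1)) := by
    intro n
    have := hF2 (seq n)
    simpa [hτs, hseqsucc] using this
  have P3 : ∀ n, (ss n, τs (n + 1)) ∉ V := by
    intro n
    have := hF3 (seq n)
    simpa [hτs, hseqsucc] using this
  set M : ℕ → ℕ → List (Cell × Cell) :=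
    fun k b => (List.range k).map (fun i => (τs (b - i), ss (b - i - 1))) with hM
  have hMsucc : ∀ k b, M (k + 1) b = (τs b, ss (b - 1)) :: M k (b - 1) := by
    intro k b
    simp only [hM, List.range_succ_eq_map, List.map_cons, List.map_map, Nat.sub_zero]
    congr 1
    apply List.map_congr_left
    intro i _
    simp only [Function.comp_apply]
    congr 2 <;> omega
  have main : ∀ k b, k ≤ b →
      IsVPath facet V (ss b) (M k b) ∧ pathLast (ss b) (M k b) = ss (b - k) := by
    intro k
    induction k with
    | zero => intro b _; simp [hM, IsVPath, pathLast]
    | succ k ih =>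
      intro b hb
      obtain ⟨ih1, ih2⟩ := ih (b - 1) (by omega)
      rw [hMsucc]
      constructor
      · refine ⟨P1 b, ?_, ?_, ih1⟩
        · have := P2 (b - 1); rwa [show b - 1 + 1 = b by omega] at this
        · have := P3 (b - 1); rwa [show b - 1 + 1 = b by omega] at this
      · rw [pathLast_cons, ih2]
        congr 1
        omega
  obtain ⟨i, j, hne, heq⟩ := Finite.exists_ne_map_eq_of_infinite τs
  -- wlog i < j
  wlog hij : i < j generalizing i j
  · exact this j i (Ne.symm hne) heq.symm (by omega)
  have hsij : ss i = ss j := by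
    have h := hV.1.2 (ss i, τs i) (P1 i) (ss j, τs j) (P1 j)
      (by right; right; right; exact heq)
    exact (Prod.ext_iff.1 h).1
  obtain ⟨hpath, hlast⟩ := main (j - i) j (by omega)
  have hlast' : pathLast (ss j) (M (j - i) j) = ss j := by
    rw [hlast, show j - (j - i) = i by omega, hsij]
  have hne' : M (j - i) j ≠ [] := by
    simp only [hM, ne_eq, List.map_eq_nil_iff, List.range_eq_nil]
    omega
  exact hV.2 (ss j) (M (j - i) j) hpath hne' hlast'

lemma indOrder_le_f (facet : Cell → Cell → Prop) (V : Set (Cell × Cell))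
    (hV : IsGradient facet V) (f : Cell → ℝ) (hf : IsPseudoMorse facet V f)
    {a b : Cell} (h : indOrder facet V a b) : f a ≤ f b := by
  induction h with
  | single h =>
    rcases h with ⟨hfac, hnV⟩ | hV'
    · exact (hf _ _ hfac).1 hnV
    · exact (hf _ _ (hV.1.1 _ hV')).2 hV'
  | tail h1 h2 ih =>
    refine le_trans ih ?_
    rcases h2 with ⟨hfac, hnV⟩ | hV'
    · exact (hf _ _ hfac).1 hnV
    · exact (hf _ _ (hV.1.1 _ hV')).2 hV'

/-- for f pseudo-Morse consistent with V, the transitive closure of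
≺_f ∪ ≺_V is a strict partial order, and there is a strict total order extending both. -/
theorem stmt3 [Fintype Cell] (dim : Cell → ℕ) (facet : Cell → Cell → Prop)
    (hdim : ∀ σ τ, facet σ τ → dim τ = dim σ + 1)
    (V : Set (Cell × Cell)) (hV : IsGradient facet V)
    (f : Cell → ℝ) (hf : IsPseudoMorse facet V f) :
    IsStrictOrder Cell
      (Relation.TransGen (fun a b => f a < f b ∨ indOrder facet V a b)) ∧
    ∃ lt : Cell → Cell → Prop, IsStrictTotalOrder Cell lt ∧
      (∀ a b, f a < f b → lt a b) ∧ (∀ a b, indOrder facet V a b → lt a b) := by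
  set R : Cell → Cell → Prop := fun a b => f a < f b ∨ indOrder facet V a b with hR
  set T : Cell → Cell → Prop := Relation.TransGen R with hT
  have hind : ∀ a b, indOrder facet V a b → f a ≤ f b :=
    fun a b h => indOrder_le_f facet V hV f hf h
  have hTG : ∀ a b, T a b → (f a < f b ∨ indOrder facet V a b) := by
    intro a b h
    induction h with
    | single h => exact h
    | tail h1 h2 ih =>
      rcases ih with h3 | h3 <;> rcases h2 with h4 | h4
      · exact Or.inl (h3.trans h4)
      · exact Or.inl (lt_of_lt_of_le h3 (hind _ _ h4))
      · exact Or.inl (lt_of_le_of_lt (hind _ _ h3) h4)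
      · exact Or.inr (h3.trans h4)
  have hirr : ∀ a, ¬ T a a := by
    intro a ha
    rcases hTG a a ha with h | h
    · exact lt_irrefl _ h
    · exact indOrder_irrefl dim facet hdim V hV a h
  haveI hIrr : IsIrrefl Cell T := ⟨hirr⟩
  haveI hTr : IsTrans Cell T := ⟨fun _ _ _ h1 h2 => h1.trans h2⟩
  haveI hSO : IsStrictOrder Cell T := { }
  refine ⟨hSO, ?_⟩
  -- extend to a linear order
  set r : Cell → Cell → Prop := fun a b => a = b ∨ T a b with hr
  haveI : IsRefl Cell r := ⟨fun a => Or.inl rfl⟩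
  haveI : IsTrans Cell r := by
    refine ⟨?_⟩
    rintro a b c (rfl | h1) (rfl | h2)
    · exact Or.inl rfl
    · exact Or.inr h2
    · exact Or.inr h1
    · exact Or.inr (h1.trans h2)
  haveI : IsPreorder Cell r := { }
  haveI : IsAntisymm Cell r := by
    refine ⟨?_⟩
    rintro a b (rfl | h1) (h2 | h2)
    · rfl
    · rfl
    · exact h2.symm
    · exact absurd (h1.trans h2) (hirr a)
  haveI : IsPartialOrder Cell r := { }
  obtain ⟨s, hs, hrs⟩ := extend_partialOrder r
  set lt : Cell → Cell → Prop := fun a b => s a b ∧ a ≠ b with hlt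
  haveI := hs
  have hanti : ∀ a b : Cell, s a b → s b a → a = b := fun a b h1 h2 => _root_.antisymm h1 h2
  have htr : ∀ a b c : Cell, s a b → s b c → s a c := fun a b c h1 h2 => _root_.trans h1 h2
  haveI : IsTrichotomous Cell lt := by
    refine ⟨fun a b => ?_⟩
    intro hn1 hn2
    by_contra hab
    rcases total_of s a b with h | h
    · exact hn1 ⟨h, hab⟩
    · exact hn2 ⟨h, Ne.symm hab⟩
  haveI : IsIrrefl Cell lt := ⟨fun a h => h.2 rfl⟩
  haveI : IsTrans Cell lt := by
    refine ⟨fun a b c h1 h2 => ⟨htr a b c h1.1 h2.1, ?_⟩⟩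
    rintro rfl
    exact h2.2 (hanti b a h2.1 h1.1)
  haveI : IsStrictOrder Cell lt := { }
  refine ⟨lt, { }, ?_, ?_⟩
  · intro a b hab
    have hT : T a b := Relation.TransGen.single (Or.inl hab)
    refine ⟨hrs a b (Or.inr hT), ?_⟩
    rintro rfl
    exact lt_irrefl _ hab
  · intro a b hab
    have hT : T a b := Relation.TransGen.single (Or.inr hab)
    refine ⟨hrs a b (Or.inr hT), ?_⟩
    rintro rfl
    exact indOrder_irrefl dim facet hdim V hV a hab
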